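/- arXiv:1502.02739 — 2 statements merged into one kernel-verified Lean document; each statement's English description precedes it below -/
import Mathlib

section
/- Under the hypotheses τρ = ρτ on L and a·τ(a) = 1, the map α defined on D by α(l₀ + l₁z + l₂z²) = τ(l₀) + τ(a)τρ(l₂)·z + τ(a)τρ²(l₁)·z² is an involution of the second kind: α² = id, α(xy) = α(y)α(x) for all x,y ∈ D, and α restricted to the center E equals τ. -/
/-- The multiplication on triples `(l₀,l₁,l₂)` induced by the cyclic algebra
`D = L ⊕ Lz ⊕ Lz²`, `z³ = a`, `zl = ρ(l)z`. -/
noncomputable def cyclicMul {E L : Type*} [Field E] [Field L] [Algebra E L]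
    (a : E) (ρ : L ≃ₐ[E] L) (x y : L × L × L) : L × L × L :=
  (x.1 * y.1 + algebraMap E L a * x.2.1 * ρ y.2.2 + algebraMap E L a * x.2.2 * ρ (ρ y.2.1),
   x.1 * y.2.1 + x.2.1 * ρ y.1 + algebraMap E L a * x.2.2 * ρ (ρ y.2.2),
   x.1 * y.2.2 + x.2.1 * ρ y.2.1 + x.2.2 * ρ (ρ y.1))

/-- The map `α(l₀ + l₁z + l₂z²) = τ(l₀) + τ(a)τρ(l₂)·z + τ(a)τρ²(l₁)·z²`,
written on triples. -/
noncomputable def alphaTriple {E L : Type*} [Field E] [Field L] [Algebra E L]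
    (a : E) (ρ : L ≃ₐ[E] L) (τE : E ≃+* E) (τ : L ≃+* L) (x : L × L × L) : L × L × L :=
  (τ x.1, algebraMap E L (τE a) * τ (ρ x.2.2), algebraMap E L (τE a) * τ (ρ (ρ x.2.1)))

/-- Under `τρ = ρτ` and `a·τ(a) = 1`, the map `α` is an involution of the second
kind on `D`: `α² = id`, `α(xy) = α(y)α(x)`, and `α` restricts to `τ` on the
center `E`. -/
theorem alpha_involution_second_kind (E L : Type*) [Field E] [Field L] [Algebra E L]
    (ρ : L ≃ₐ[E] L) (hρ : ∀ l, ρ (ρ (ρ l)) = l)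
    (τE : E ≃+* E) (hτE : τE * τE = 1) (τ : L ≃+* L)
    (hcompat : ∀ e : E, τ (algebraMap E L e) = algebraMap E L (τE e))
    (hτ2 : τ * τ = 1)
    (hcomm : ∀ l : L, τ (ρ l) = ρ (τ l))
    (a : E) (ha : a * τE a = 1) :
    (∀ x : L × L × L, alphaTriple a ρ τE τ (alphaTriple a ρ τE τ x) = x) ∧
    (∀ x y : L × L × L,
      alphaTriple a ρ τE τ (cyclicMul a ρ x y) =
        cyclicMul a ρ (alphaTriple a ρ τE τ y) (alphaTriple a ρ τE τ x)) ∧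
    (∀ e : E, alphaTriple a ρ τE τ (algebraMap E L e, 0, 0) =
        (algebraMap E L (τE e), 0, 0)) := by
  have hττ : ∀ l : L, τ (τ l) = l := fun l => RingEquiv.congr_fun hτ2 l
  have hτEτE : ∀ e : E, τE (τE e) = e := fun e => RingEquiv.congr_fun hτE e
  set b : L := algebraMap E L a with hb
  set c : L := algebraMap E L (τE a) with hc
  have hbc : b * c = 1 := by rw [hb, hc, ← map_mul, ha, map_one]
  have hb0 : b ≠ 0 := left_ne_zero_of_mul_eq_one hbc
  have hcb : c = b⁻¹ := eq_inv_of_mul_eq_one_right hbc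
  have hρb : ρ b = b := ρ.commutes a
  have hρc : ρ c = c := ρ.commutes (τE a)
  have hτb : τ b = c := hcompat a
  have hτc : τ c = b := by rw [hc, hcompat, hτEτE]
  refine ⟨?_, ?_, ?_⟩
  · intro x
    simp only [alphaTriple, map_mul, hcomm, hττ, hρ, hρb, hρc, hτc]
    refine Prod.ext ?_ (Prod.ext ?_ ?_) <;>
      first
        | rfl
        | (simp only [← hb, ← hc, hcb, map_inv₀, hτb, hτc, hρb, hρc, inv_inv]; field_simp)
  · intro x y
    simp only [alphaTriple, cyclicMul, map_mul, map_add, hcomm, hττ, hρ, hρb, hρc, hτb, hτc]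
    refine Prod.ext ?_ (Prod.ext ?_ ?_) <;>
      · simp only [← hb, ← hc, hcb, map_inv₀, hτb, hτc, hρb, hρc, inv_inv]; field_simp <;> ring
  · intro e
    simp only [alphaTriple, hcompat, map_zero, mul_zero]
end

section
/- Let a = (2+√-3)/(2-√-3) ∈ E = Q(√-3) and L = Q(ζ₉). Then a is not a norm from L to E, i.e., there is no x ∈ L with N_{L/E}(x) = a. -/
open Polynomial

private instance fact17 : Fact (1 < 7) := ⟨by norm_num⟩
private instance fact7p : Fact (Nat.Prime 7) := ⟨by norm_num⟩

private lemma irred34 : Irreducible (X ^ 3 - C 4 : (ZMod 7)[X]) := by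
  have hd : (X ^ 3 - C 4 : (ZMod 7)[X]).natDegree = 3 := natDegree_X_pow_sub_C
  refine (Polynomial.irreducible_iff_roots_eq_zero_of_degree_le_three
    (p := (X ^ 3 - C 4 : (ZMod 7)[X])) (by rw [hd]; norm_num) (by rw [hd])).mpr ?_
  rw [Multiset.eq_zero_iff_forall_notMem]
  intro a ha
  rw [mem_roots (by intro h; rw [h] at hd; simp at hd), IsRoot.def] at ha
  simp only [eval_sub, eval_pow, eval_X, eval_C, sub_eq_zero] at ha
  revert ha; revert a; decide

private instance fact34 : Fact (Irreducible (X ^ 3 - C 4 : (ZMod 7)[X])) := ⟨irred34⟩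

private noncomputable abbrev K7 := AdjoinRoot (X ^ 3 - C 4 : (ZMod 7)[X])

private noncomputable def chi : Polynomial ℤ →+* K7 :=
  (AdjoinRoot.mk _).comp (Polynomial.mapRingHom (Int.castRingHom (ZMod 7)))

private noncomputable def rt : K7 := AdjoinRoot.root _

private lemma rt_cube : rt ^ 3 = 4 := by
  have h := AdjoinRoot.mk_self (f := (X ^ 3 - C 4 : (ZMod 7)[X]))
  have h2 : (AdjoinRoot.mk _ (X ^ 3) : K7) - AdjoinRoot.mk _ (C 4) = 0 := by
    rw [← map_sub]; exact h
  rw [map_pow, AdjoinRoot.mk_X, AdjoinRoot.mk_C, sub_eq_zero] at h2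
  rw [rt, h2]
  show algebraMap (ZMod 7) K7 4 = 4
  rw [map_ofNat]

private lemma seven_K7 : (7 : K7) = 0 := by
  have h : ((7 : ℕ) : K7) = algebraMap (ZMod 7) K7 ((7 : ℕ) : ZMod 7) :=
    (map_natCast (algebraMap (ZMod 7) K7) 7).symm
  have h7 : ((7 : ℕ) : ZMod 7) = 0 := by decide
  rw [h7, map_zero] at h
  exact_mod_cast h

private lemma chi_X : chi X = rt := by
  simp only [chi, RingHom.comp_apply, coe_mapRingHom, map_X, AdjoinRoot.mk_X]; rfl

private lemma chi_intCast (a : ℤ) : chi (C a) = (a : K7) := by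
  have h : (C a : Polynomial ℤ) = (a : Polynomial ℤ) := by simp
  rw [h, map_intCast]

private lemma sigma_aux :
    Polynomial.eval₂ (algebraMap (ZMod 7) K7) (4 * rt) (X ^ 3 - C 4 : (ZMod 7)[X]) = 0 := by
  simp only [eval₂_sub, eval₂_pow, eval₂_X, eval₂_C]
  rw [mul_pow, rt_cube]
  have h4 : (algebraMap (ZMod 7) K7) 4 = 4 := map_ofNat _ 4
  rw [h4]
  have h7 : (7 : K7) = 0 := seven_K7
  linear_combination (36 : K7) * h7

private noncomputable def sig : K7 →+* K7 :=
  AdjoinRoot.lift (algebraMap (ZMod 7) K7) (4 * rt) sigma_aux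

private lemma sig_rt : sig rt = 4 * rt := AdjoinRoot.lift_root sigma_aux

private lemma sig_inj : Function.Injective sig := sig.injective

private lemma chi_comp (g : Polynomial ℤ) :
    chi (g.comp (X ^ 4)) = sig (chi g) := by
  have key : chi.comp (eval₂RingHom (C : ℤ →+* Polynomial ℤ) (X ^ 4)) = sig.comp chi := by
    apply Polynomial.ringHom_ext
    · intro a
      simp only [RingHom.comp_apply, coe_eval₂RingHom, eval₂_C]
      rw [chi_intCast]
      exact (map_intCast sig a).symm
    · simp only [RingHom.comp_apply, coe_eval₂RingHom, eval₂_X]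
      rw [map_pow, chi_X, sig_rt]
      calc rt ^ 4 = rt ^ 3 * rt := by ring
        _ = 4 * rt := by rw [rt_cube]
  have := congrFun (congrArg (fun f => f.toFun) key) g
  simpa [Polynomial.comp] using this

private lemma chi_phi : chi (X ^ 6 + X ^ 3 + 1) = 0 := by
  show (AdjoinRoot.mk _) ((X ^ 6 + X ^ 3 + 1 : Polynomial ℤ).map (Int.castRingHom (ZMod 7))) = 0
  rw [AdjoinRoot.mk_eq_zero]
  refine ⟨X ^ 3 + C 5, ?_⟩
  have : ((X ^ 6 + X ^ 3 + 1 : Polynomial ℤ)).map (Int.castRingHom (ZMod 7)) =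
      X ^ 6 + X ^ 3 + 1 := by
    simp [Polynomial.map_add, Polynomial.map_pow]
  rw [this]
  have hA : (C (5 : ZMod 7) : (ZMod 7)[X]) - C 4 = 1 := by
    rw [← map_sub, show (5 - 4 : ZMod 7) = 1 from by decide, map_one]
  have hB : (C (4 : ZMod 7) : (ZMod 7)[X]) * C 5 = -1 := by
    rw [← map_mul, show (4 * 5 : ZMod 7) = -1 from by decide, map_neg, map_one]
  linear_combination (-(X ^ 3) : (ZMod 7)[X]) * hA + hB

private lemma chi_pi : chi (1 - 2 * X ^ 3) = 0 := by
  have h : chi (1 - 2 * X ^ 3) = 1 - 2 * rt ^ 3 := by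
    rw [map_sub, map_one, map_mul, map_pow, chi_X, map_ofNat chi 2]
  rw [h, rt_cube]
  have h7 : (7 : K7) = 0 := seven_K7
  linear_combination (-1 : K7) * h7

private lemma chi_pi' : chi (3 + 2 * X ^ 3) = 4 := by
  have h : chi (3 + 2 * X ^ 3) = 3 + 2 * rt ^ 3 := by
    rw [map_add, map_mul, map_pow, chi_X, map_ofNat chi 2, map_ofNat chi 3]
  rw [h, rt_cube]
  have h7 : (7 : K7) = 0 := seven_K7
  linear_combination h7

private lemma ker_chi {g : Polynomial ℤ} (hg : chi g = 0) :
    ∃ u v : Polynomial ℤ,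
      g = u * (X ^ 6 + X ^ 3 + 1) + v * (1 - 2 * X ^ 3) := by
  have hdvd : (X ^ 3 - C 4 : (ZMod 7)[X]) ∣ g.map (Int.castRingHom (ZMod 7)) :=
    AdjoinRoot.mk_eq_zero.mp hg
  have hmonic : (X ^ 3 - C 4 : Polynomial ℤ).Monic := by
    exact monic_X_pow_sub_C (4 : ℤ) (by norm_num)
  have hgqr := (modByMonic_add_div g (X ^ 3 - C 4)).symm
  set q := g /ₘ (X ^ 3 - C 4) with hq
  set r := g %ₘ (X ^ 3 - C 4) with hr
  have hmap34 : (X ^ 3 - C 4 : Polynomial ℤ).map (Int.castRingHom (ZMod 7)) =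
      (X ^ 3 - C 4 : (ZMod 7)[X]) := by
    rw [Polynomial.map_sub, Polynomial.map_pow, map_X, map_C]
    norm_num
  have hrmap : r.map (Int.castRingHom (ZMod 7)) = 0 := by
    rw [hr, Polynomial.map_modByMonic _ hmonic, hmap34]
    exact (modByMonic_eq_zero_iff_dvd (by
      rw [← hmap34]; exact hmonic.map _)).mpr hdvd
  have h7r : (C (7 : ℤ)) ∣ r := by
    rw [Polynomial.C_dvd_iff_dvd_coeff]
    intro i
    have : ((r.coeff i : ℤ) : ZMod 7) = 0 := by
      have := congrArg (fun p => Polynomial.coeff p i) hrmap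
      simpa [Polynomial.coeff_map] using this
    exact_mod_cast (ZMod.intCast_zmod_eq_zero_iff_dvd _ 7).mp this
  obtain ⟨s, hs⟩ := h7r
  refine ⟨q * (8 * X ^ 3 - 6) - 8 * s * (X ^ 3 - 1),
          q * (4 * X ^ 6 + 3 * X ^ 3 + 2) - s * (4 * X ^ 6 + 2 * X ^ 3 + 1), ?_⟩
  have hC4 : (C (4 : ℤ) : Polynomial ℤ) = 4 := map_ofNat C 4
  have hC7 : (C (7 : ℤ) : Polynomial ℤ) = 7 := map_ofNat C 7
  rw [hgqr, hs, hC4, hC7]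
  ring

private lemma monicPhi : (X ^ 6 + X ^ 3 + 1 : Polynomial ℤ).Monic := by
  have h : (X ^ 6 + X ^ 3 + 1 : Polynomial ℤ) = X ^ 6 + (X ^ 3 + 1) := by ring
  rw [h]
  apply monic_X_pow_add
  apply lt_of_le_of_lt (degree_add_le _ _)
  rw [degree_X_pow, degree_one]
  exact max_lt (by norm_num) (by norm_num)

private lemma aeval_chi {L : Type*} [Field L] [Algebra ℚ L] (ζ : L)
    (hζ : IsPrimitiveRoot ζ 9) {D : Polynomial ℤ}
    (hD : (Polynomial.aeval ζ) D = 0) : chi D = 0 := by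
  haveI : CharZero L := charZero_of_injective_algebraMap (algebraMap ℚ L).injective
  have hcyc : Polynomial.cyclotomic 9 ℚ = minpoly ℚ ζ := by
    have h := Polynomial.cyclotomic_eq_minpoly_rat hζ (by norm_num)
    convert h using 2 <;> exact Subsingleton.elim _ _
  have hcyc9 : Polynomial.cyclotomic 9 ℚ = X ^ 6 + X ^ 3 + 1 := by
    have h := Polynomial.cyclotomic_prime_pow_eq_geom_sum (R := ℚ) (p := 3) (n := 1)
      (by norm_num)
    norm_num at h
    rw [h]
    rw [Finset.sum_range_succ, Finset.sum_range_succ, Finset.sum_range_one]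
    ring
  have hdvdQ : (X ^ 6 + X ^ 3 + 1 : Polynomial ℚ) ∣ D.map (algebraMap ℤ ℚ) := by
    rw [← hcyc9, hcyc]
    apply minpoly.dvd
    rw [Polynomial.aeval_map_algebraMap]
    exact hD
  have hmapPhi : (X ^ 6 + X ^ 3 + 1 : Polynomial ℤ).map (algebraMap ℤ ℚ) =
      (X ^ 6 + X ^ 3 + 1 : Polynomial ℚ) := by
    simp [Polynomial.map_add, Polynomial.map_pow]
  have h0 : (D %ₘ (X ^ 6 + X ^ 3 + 1)).map (algebraMap ℤ ℚ) = 0 := by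
    rw [Polynomial.map_modByMonic _ monicPhi, hmapPhi]
    refine (modByMonic_eq_zero_iff_dvd ?_).mpr hdvdQ
    rw [← hmapPhi]; exact monicPhi.map _
  have hr0 : D %ₘ (X ^ 6 + X ^ 3 + 1) = 0 := by
    have hinj : Function.Injective (algebraMap ℤ ℚ) := fun a b h => by exact_mod_cast h
    have := Polynomial.map_injective (algebraMap ℤ ℚ) hinj
    apply this
    rw [h0, Polynomial.map_zero]
  obtain ⟨c, hc⟩ := (modByMonic_eq_zero_iff_dvd monicPhi).mp hr0
  rw [hc, map_mul, chi_phi, zero_mul]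

private lemma descent {L : Type*} [Field L] [Algebra ℚ L] (ζ : L)
    (hζ : IsPrimitiveRoot ζ 9) (ρ : L ≃ₐ[ℚ] L) (hρ : ρ ζ = ζ ^ 4) :
    ∀ n : ℕ, ∀ j : ℕ, ∀ g : Polynomial ℤ,
      (Polynomial.aeval ζ) g * ρ ((Polynomial.aeval ζ) g) * ρ (ρ ((Polynomial.aeval ζ) g)) *
          (1 - 2 * ζ ^ 3) = (n : L) ^ 3 * (3 + 2 * ζ ^ 3) ^ (3 * j + 1) → n = 0 := by
  haveI : CharZero L := charZero_of_injective_algebraMap (algebraMap ℚ L).injective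
  have h9 : ζ ^ 9 = 1 := hζ.pow_eq_one
  have h3ne : ζ ^ 3 ≠ 1 := fun h => by
    have := (hζ.pow_eq_one_iff_dvd 3).mp h; omega
  have hΦζ : ζ ^ 6 + ζ ^ 3 + 1 = 0 := by
    have hfac : (ζ ^ 3 - 1) * (ζ ^ 6 + ζ ^ 3 + 1) = 0 := by linear_combination h9
    rcases mul_eq_zero.mp hfac with h | h
    · exact absurd (sub_eq_zero.mp h) h3ne
    · exact h
  have hπ0 : (1 : L) - 2 * ζ ^ 3 ≠ 0 := by
    intro h
    have h7 : (7 : L) = 0 := by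
      linear_combination (-(1 + 2 * ζ ^ 3 + 4 * ζ ^ 6) : L) * h - 8 * h9
    norm_num at h7
  have hρ3 : ρ (ζ ^ 3) = ζ ^ 3 := by
    rw [map_pow, hρ, ← pow_mul]
    have h12 : ζ ^ (4 * 3) = ζ ^ 9 * ζ ^ 3 := by ring
    rw [h12, h9, one_mul]
  have hρπ : ρ (1 - 2 * ζ ^ 3) = 1 - 2 * ζ ^ 3 := by
    rw [map_sub, map_one, map_mul, hρ3, map_ofNat]
  have h7fac : (1 - 2 * ζ ^ 3) * (3 + 2 * ζ ^ 3) = 7 := by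
    linear_combination (-4 : L) * hΦζ
  have hρa : ∀ g : Polynomial ℤ,
      ρ ((Polynomial.aeval ζ) g) = (Polynomial.aeval ζ) (g.comp (X ^ 4)) := by
    intro g
    rw [Polynomial.aeval_comp]
    have h1 : (Polynomial.aeval ζ) (X ^ 4 : Polynomial ℤ) = ζ ^ 4 := by simp
    rw [h1, ← hρ]
    exact (Polynomial.aeval_algHom_apply ((ρ.toAlgHom).restrictScalars ℤ) ζ g).symm
  have hK4 : (4 : K7) ≠ 0 := by
    intro h
    have h4 : algebraMap (ZMod 7) K7 4 = 4 := map_ofNat _ 4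
    rw [← h4] at h
    have := (algebraMap (ZMod 7) K7).injective (by rw [h, map_zero] : algebraMap (ZMod 7) K7 4 = algebraMap (ZMod 7) K7 0)
    exact absurd this (by decide)
  intro n
  induction n using Nat.strong_induction_on with
  | _ n IH =>
    intro j g H
    by_cases hn : n = 0
    · exact hn
    have hY1 : ρ ((Polynomial.aeval ζ) g) = (Polynomial.aeval ζ) (g.comp (X ^ 4)) := hρa g
    have hY2 : ρ (ρ ((Polynomial.aeval ζ) g)) =
        (Polynomial.aeval ζ) ((g.comp (X ^ 4)).comp (X ^ 4)) := by rw [hY1, hρa]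
    -- step 1 : 7 ∣ n
    have hD1 : (Polynomial.aeval ζ) (g * g.comp (X ^ 4) * (g.comp (X ^ 4)).comp (X ^ 4) *
        (1 - 2 * X ^ 3) - Polynomial.C ((n : ℤ) ^ 3) * (3 + 2 * X ^ 3) ^ (3 * j + 1)) = 0 := by
      simp only [map_sub, map_mul, map_add, map_pow, map_one, Polynomial.aeval_X,
        Polynomial.aeval_C, map_ofNat]
      push_cast
      rw [← hY1, ← hY2]
      linear_combination H
    have hχ1 := aeval_chi ζ hζ hD1
    rw [map_sub] at hχ1
    have hA : chi (g * g.comp (X ^ 4) * (g.comp (X ^ 4)).comp (X ^ 4) * (1 - 2 * X ^ 3)) = 0 := by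
      rw [map_mul, chi_pi, mul_zero]
    have hB : chi (Polynomial.C ((n : ℤ) ^ 3) * (3 + 2 * X ^ 3) ^ (3 * j + 1)) =
        (n : K7) ^ 3 * 4 ^ (3 * j + 1) := by
      rw [map_mul, chi_intCast, map_pow, chi_pi']
      push_cast
      ring
    rw [hA, hB, zero_sub, neg_eq_zero] at hχ1
    have hn7 : 7 ∣ n := by
      have hprod : ((n : K7)) ^ 3 * 4 ^ (3 * j + 1) = 0 := hχ1
      have h0 : ((n : K7)) ^ 3 = 0 := by
        rcases mul_eq_zero.mp hprod with h | h
        · exact h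
        · exact absurd h (pow_ne_zero _ hK4)
      have hnK : (n : K7) = 0 := by
        exact pow_eq_zero_iff (by norm_num) |>.mp h0
      have hcast : ((n : ZMod 7) : K7) = algebraMap (ZMod 7) K7 (n : ZMod 7) := rfl
      have : algebraMap (ZMod 7) K7 ((n : ZMod 7)) = 0 := by
        rw [← hcast]; push_cast; exact_mod_cast hnK
      have hz : (n : ZMod 7) = 0 := (algebraMap (ZMod 7) K7).injective (by rw [this, map_zero])
      exact (ZMod.natCast_eq_zero_iff n 7).mp hz
    obtain ⟨m, hm⟩ := hn7
    -- step 2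
    have H2 : (Polynomial.aeval ζ) g * ρ ((Polynomial.aeval ζ) g) * ρ (ρ ((Polynomial.aeval ζ) g)) =
        (1 - 2 * ζ ^ 3) ^ 2 * (3 + 2 * ζ ^ 3) ^ (3 * j + 4) * (m : L) ^ 3 := by
      apply mul_right_cancel₀ hπ0
      rw [H, hm]
      push_cast
      linear_combination (-((m:L)^3 * (3 + 2*ζ^3)^(3*j+1) *
        ((1 - 2*ζ^3)^2 * (3 + 2*ζ^3)^2 + 7 * (1 - 2*ζ^3) * (3 + 2*ζ^3) + 49))) * h7fac
    -- step 3 : chi g = 0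
    have hD2 : (Polynomial.aeval ζ) (g * g.comp (X ^ 4) * (g.comp (X ^ 4)).comp (X ^ 4)
        - (1 - 2 * X ^ 3) ^ 2 * (3 + 2 * X ^ 3) ^ (3 * j + 4) * Polynomial.C ((m : ℤ) ^ 3)) = 0 := by
      simp only [map_sub, map_mul, map_add, map_pow, map_one, Polynomial.aeval_X,
        Polynomial.aeval_C, map_ofNat]
      push_cast
      rw [← hY1, ← hY2]
      linear_combination H2
    have hχ2 := aeval_chi ζ hζ hD2
    rw [map_sub] at hχ2
    have hB2 : chi ((1 - 2 * X ^ 3) ^ 2 * (3 + 2 * X ^ 3) ^ (3 * j + 4) *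
        Polynomial.C ((m : ℤ) ^ 3)) = 0 := by
      rw [map_mul, map_mul, map_pow, chi_pi]
      ring
    rw [hB2, sub_zero] at hχ2
    have hg0 : chi g = 0 := by
      have hprod : chi g * chi (g.comp (X ^ 4)) * chi ((g.comp (X ^ 4)).comp (X ^ 4)) = 0 := by
        rw [← map_mul, ← map_mul]
        exact hχ2
      rcases mul_eq_zero.mp hprod with h | h
      · rcases mul_eq_zero.mp h with h' | h'
        · exact h'
        · rw [chi_comp] at h'
          exact sig_inj (by rw [h', map_zero])
      · rw [chi_comp, chi_comp] at h
        have := sig_inj (by rw [h, map_zero] : sig (sig (chi g)) = sig 0)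
        exact sig_inj (by rw [this, map_zero])
    obtain ⟨u, v, huv⟩ := ker_chi hg0
    have haevalPhi : (Polynomial.aeval ζ) (X ^ 6 + X ^ 3 + 1 : Polynomial ℤ) = 0 := by
      simp only [map_add, map_pow, Polynomial.aeval_X, map_one]
      exact hΦζ
    have haevalPi : (Polynomial.aeval ζ) (1 - 2 * X ^ 3 : Polynomial ℤ) = 1 - 2 * ζ ^ 3 := by
      rw [map_sub, map_one, map_mul, map_pow, Polynomial.aeval_X, map_ofNat]
    have hgZ : (Polynomial.aeval ζ) g = (1 - 2 * ζ ^ 3) * (Polynomial.aeval ζ) v := by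
      rw [huv, map_add, map_mul, map_mul, haevalPhi, mul_zero, zero_add, haevalPi]
      ring
    have hZ1 : ρ ((Polynomial.aeval ζ) g) = (1 - 2 * ζ ^ 3) * ρ ((Polynomial.aeval ζ) v) := by
      rw [hgZ, map_mul, hρπ]
    have hZ2 : ρ (ρ ((Polynomial.aeval ζ) g)) =
        (1 - 2 * ζ ^ 3) * ρ (ρ ((Polynomial.aeval ζ) v)) := by
      rw [hZ1, map_mul, hρπ]
    have H3 : (Polynomial.aeval ζ) v * ρ ((Polynomial.aeval ζ) v) * ρ (ρ ((Polynomial.aeval ζ) v)) *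
        (1 - 2 * ζ ^ 3) = (m : L) ^ 3 * (3 + 2 * ζ ^ 3) ^ (3 * (j + 1) + 1) := by
      have hc : ((1 - 2 * ζ ^ 3) ^ 2 : L) ≠ 0 := pow_ne_zero _ hπ0
      apply mul_left_cancel₀ hc
      have H2' := H2
      rw [hZ2, hZ1, hgZ] at H2'
      linear_combination H2'
    have hm0 := IH m (by omega) (j + 1) v H3
    omega

/-- In `L = ℚ(ζ₉)` with `E = ℚ(√-3) = ℚ(ζ₃)` the fixed field of
`ρ : ζ₉ ↦ ζ₉⁴` (a generator of `Gal(L/E)`), the element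
`a = (2+√-3)/(2-√-3)`, with `√-3 = 1 + 2ζ₃ = 1 + 2ζ₉³`, is not a relative norm
`N_{L/E}(x) = x·ρ(x)·ρ²(x)` from `L`. -/
theorem a_not_a_norm (L : Type*) [Field L] [Algebra ℚ L]
    (ζ : L) (hζ : IsPrimitiveRoot ζ 9)
    (hL : Algebra.adjoin ℚ {ζ} = ⊤)
    (ρ : L ≃ₐ[ℚ] L) (hρ : ρ ζ = ζ ^ 4) :
    ¬ ∃ x : L, x * ρ x * ρ (ρ x) =
        (2 + (1 + 2 * ζ ^ 3)) / (2 - (1 + 2 * ζ ^ 3)) := by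
  rintro ⟨x, hx⟩
  haveI : CharZero L := charZero_of_injective_algebraMap (algebraMap ℚ L).injective
  have h9 : ζ ^ 9 = 1 := hζ.pow_eq_one
  have hπ0 : (1 : L) - 2 * ζ ^ 3 ≠ 0 := by
    intro h
    have h7 : (7 : L) = 0 := by
      linear_combination (-(1 + 2 * ζ ^ 3 + 4 * ζ ^ 6) : L) * h - 8 * h9
    norm_num at h7
  have hπ0' : (2 : L) - (1 + 2 * ζ ^ 3) ≠ 0 := by
    intro h; apply hπ0; linear_combination h
  have hx' : x * ρ x * ρ (ρ x) * (1 - 2 * ζ ^ 3) = 3 + 2 * ζ ^ 3 := by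
    rw [eq_div_iff hπ0'] at hx
    linear_combination hx
  obtain ⟨n, g, hn0, hng⟩ : ∃ (n : ℕ) (g : Polynomial ℤ), n ≠ 0 ∧
      (n : L) * x = (Polynomial.aeval ζ) g := by
    have hx_mem : x ∈ Algebra.adjoin ℚ {ζ} := by rw [hL]; trivial
    refine Algebra.adjoin_induction ?_ ?_ ?_ ?_ hx_mem
    · rintro y hy
      rw [Set.mem_singleton_iff] at hy
      subst hy
      exact ⟨1, X, one_ne_zero, by simp⟩
    · intro r
      refine ⟨r.den, Polynomial.C r.num, r.den_nz, ?_⟩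
      have hden : ((r.den : ℚ)) * r = (r.num : ℚ) := by
        rw [mul_comm]
        exact_mod_cast Rat.mul_den_eq_num r
      rw [Polynomial.aeval_C]
      have h2 : (algebraMap ℤ L) r.num = ((r.num : L)) := map_intCast _ _
      rw [h2]
      calc (r.den : L) * algebraMap ℚ L r = algebraMap ℚ L ((r.den : ℚ) * r) := by
            rw [map_mul, map_natCast]
        _ = algebraMap ℚ L ((r.num : ℚ)) := by rw [hden]
        _ = (r.num : L) := map_intCast _ _
    · rintro y z hy hz ⟨n₁, g₁, hn₁, h₁⟩ ⟨n₂, g₂, hn₂, h₂⟩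
      refine ⟨n₁ * n₂, Polynomial.C (n₂ : ℤ) * g₁ + Polynomial.C (n₁ : ℤ) * g₂,
        mul_ne_zero hn₁ hn₂, ?_⟩
      rw [map_add, map_mul, map_mul, Polynomial.aeval_C, Polynomial.aeval_C]
      push_cast
      linear_combination ((n₂ : L)) * h₁ + ((n₁ : L)) * h₂
    · rintro y z hy hz ⟨n₁, g₁, hn₁, h₁⟩ ⟨n₂, g₂, hn₂, h₂⟩
      refine ⟨n₁ * n₂, g₁ * g₂, mul_ne_zero hn₁ hn₂, ?_⟩
      rw [map_mul]
      push_cast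
      linear_combination ((n₂ : L) * z) * h₁ + ((Polynomial.aeval ζ) g₁) * h₂
  have hr1 : ρ ((n : L) * x) = (n : L) * ρ x := by rw [map_mul, map_natCast]
  have hr2 : ρ (ρ ((n : L) * x)) = (n : L) * ρ (ρ x) := by rw [hr1, map_mul, map_natCast]
  have H : (Polynomial.aeval ζ) g * ρ ((Polynomial.aeval ζ) g) * ρ (ρ ((Polynomial.aeval ζ) g)) *
      (1 - 2 * ζ ^ 3) = (n : L) ^ 3 * (3 + 2 * ζ ^ 3) ^ (3 * 0 + 1) := by
    rw [← hng, hr2, hr1]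
    linear_combination ((n : L) ^ 3) * hx'
  exact hn0 (descent ζ hζ ρ hρ n 0 g H)
end
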